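/- Let W(z) = p'(z)q(z) - p(z)q'(z) where p(z) = a_1 z + … + a_n z^n + z^{n+1} and q(z) = 1 + conj(a_n) z + … + conj(a_1) z^n. Then W is self-inversive of degree 2n in the sense that W(z) = z^{2n}·conj(W(1/conj(z))) for all z ≠ 0; equivalently, the coefficients c_0,…,c_{2n} of W satisfy c_j = conj(c_{2n-j}) for all j = 0,…,2n. -/

import Mathlib

open Polynomial Complex Finset

lemma coeff_sum_aux (n : ℕ) (b : ℕ → ℂ) (j : ℕ) :
    (∑ i ∈ Icc 1 n, C (b i) * X ^ i).coeff j = if 1 ≤ j ∧ j ≤ n then b j else 0 := by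
  rw [finset_sum_coeff]
  have : ∀ i ∈ Icc 1 n, (C (b i) * X ^ i).coeff j = if i = j then b i else 0 := by
    intro i _
    simp [coeff_C_mul, coeff_X_pow, eq_comm, mul_ite]
  rw [Finset.sum_congr rfl this, Finset.sum_ite_eq']
  simp [mem_Icc]

lemma deriv_reflect_aux (f : ℂ[X]) (N : ℕ) (hN : 1 ≤ N) (hf : f.natDegree ≤ N) :
    derivative (reflect N f) = reflect (N - 1) (C (N : ℂ) * f - X * derivative f) := by
  ext j
  rw [coeff_derivative, coeff_reflect, coeff_reflect, coeff_sub, coeff_C_mul]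
  have hXf : (X * derivative f).coeff (revAt (N-1) j)
      = (revAt (N-1) j : ℂ) * f.coeff (revAt (N-1) j) := by
    rcases Nat.eq_zero_or_pos (revAt (N-1) j) with h | h
    · simp [h]
    · obtain ⟨k, hk⟩ := Nat.exists_eq_succ_of_ne_zero h.ne'
      rw [hk, coeff_X_mul, coeff_derivative]
      push_cast; ring
  rw [hXf]
  by_cases hj : j + 1 ≤ N
  · rw [revAt_le hj, revAt_le (by omega : j ≤ N - 1)]
    have h1 : N - 1 - j = N - (j+1) := by omega
    rw [h1]
    have h2 : ((N - (j+1) : ℕ) : ℂ) = (N : ℂ) - (j+1 : ℕ) := by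
      push_cast [Nat.cast_sub hj]; ring
    rw [h2]; push_cast; ring
  · rw [revAt_eq_self_of_lt (by omega : N - 1 < j)]
    have h1 : f.coeff (revAt N (j+1)) = 0 := by
      rw [revAt_eq_self_of_lt (by omega)]
      exact coeff_eq_zero_of_natDegree_lt (by omega)
    rcases eq_or_lt_of_le (by omega : N ≤ j) with h | h
    · rw [h1, ← h]; ring
    · rw [h1, coeff_eq_zero_of_natDegree_lt (by omega)]; ring

lemma g_deg_aux (f : ℂ[X]) (N : ℕ) (hN : 1 ≤ N) (hf : f.natDegree ≤ N) :
    (C (N : ℂ) * f - X * derivative f).natDegree ≤ N - 1 := by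
  refine natDegree_le_iff_coeff_eq_zero.mpr fun m hm => ?_
  obtain ⟨k, rfl⟩ : ∃ k, m = k + 1 := ⟨m - 1, by omega⟩
  rw [coeff_sub, coeff_C_mul, coeff_X_mul, coeff_derivative]
  by_cases h : k + 1 = N
  · have : ((k : ℂ) + 1) = (N : ℂ) := by
      rw [← h]; push_cast; ring
    rw [h, this]; ring
  · have : f.coeff (k+1) = 0 := coeff_eq_zero_of_natDegree_lt (by omega)
    rw [this]; ring

/-- The Wronskian `W = p'q - pq'` of the Blaschke ansatz is self-inversive of degree `2n`:
`W(z) = z^{2n} · conj(W(1/conj z))` for `z ≠ 0`, equivalently its coefficients satisfy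
`c_j = conj (c_{2n-j})` for `0 ≤ j ≤ 2n`. -/
theorem wronskian_self_inversive (n : ℕ) (hn : 1 ≤ n) (a : ℕ → ℂ)
    (p q W : ℂ[X])
    (hp : p = X ^ (n + 1) + ∑ i ∈ Icc 1 n, C (a i) * X ^ i)
    (hq : q = 1 + ∑ i ∈ Icc 1 n, C ((starRingEnd ℂ) (a (n - i + 1))) * X ^ i)
    (hW : W = derivative p * q - p * derivative q) :
    (∀ z : ℂ, z ≠ 0 →
        W.eval z = z ^ (2 * n) * (starRingEnd ℂ) (W.eval (1 / (starRingEnd ℂ) z))) ∧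
      (∀ j : ℕ, j ≤ 2 * n → W.coeff j = (starRingEnd ℂ) (W.coeff (2 * n - j))) := by
  set σ := starRingEnd ℂ with hσ
  have hpc : ∀ j, p.coeff j
      = (if j = n+1 then 1 else 0) + (if 1 ≤ j ∧ j ≤ n then a j else 0) := by
    intro j; rw [hp, coeff_add, coeff_X_pow, coeff_sum_aux]
  have hqc : ∀ j, q.coeff j
      = (if j = 0 then 1 else 0) + (if 1 ≤ j ∧ j ≤ n then σ (a (n-j+1)) else 0) := by
    intro j; rw [hq, coeff_add, coeff_one, coeff_sum_aux]
  have hpd : p.natDegree ≤ n+1 := by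
    refine natDegree_le_iff_coeff_eq_zero.mpr fun m hm => ?_
    rw [hpc, if_neg (by omega), if_neg (by omega), add_zero]
  have hqd : q.natDegree ≤ n := by
    refine natDegree_le_iff_coeff_eq_zero.mpr fun m hm => ?_
    rw [hqc, if_neg (by omega), if_neg (by omega), add_zero]
  set P := p.map σ with hPdef
  set Q := q.map σ with hQdef
  have hPd : P.natDegree ≤ n+1 := natDegree_map_le.trans hpd
  have hQd : Q.natDegree ≤ n := natDegree_map_le.trans hqd
  have hσσ : ∀ g : ℂ[X], (g.map σ).map σ = g := by
    intro g
    rw [Polynomial.map_map]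
    have : σ.comp σ = RingHom.id ℂ := RingHom.ext fun x => Complex.conj_conj x
    rw [this, map_id]
  have hqP : q = reflect (n+1) P := by
    ext j
    rw [coeff_reflect, hPdef, coeff_map, hqc j, hpc (revAt (n+1) j), map_add]
    rcases le_or_gt j (n+1) with hj | hj
    · rw [revAt_le hj]
      by_cases h0 : j = 0
      · subst h0
        rw [if_pos rfl, if_pos (show n+1-0 = n+1 from rfl),
          if_neg (by omega : ¬(1 ≤ 0 ∧ 0 ≤ n)),
          if_neg (by omega : ¬(1 ≤ n+1-0 ∧ n+1-0 ≤ n))]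
        simp
      · by_cases h1 : j = n+1
        · subst h1
          rw [if_neg (by omega), if_neg (by omega),
            if_neg (by omega : ¬(n+1-(n+1) = n+1)),
            if_neg (by omega : ¬(1 ≤ n+1-(n+1) ∧ n+1-(n+1) ≤ n))]
          simp
        · rw [if_neg h0, if_pos (by omega : 1 ≤ j ∧ j ≤ n),
            if_neg (by omega : ¬(n+1-j = n+1)),
            if_pos (by omega : 1 ≤ n+1-j ∧ n+1-j ≤ n)]
          have : n + 1 - j = n - j + 1 := by omega
          rw [this]
          simp
    · rw [revAt_eq_self_of_lt (by omega),
        if_neg (by omega), if_neg (by omega), if_neg (by omega), if_neg (by omega)]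
      simp
  have hQp : Q = reflect (n+1) p := by
    rw [hQdef, hqP, ← reflect_map, hσσ]
  have hpQ : p = reflect (n+1) Q := by
    rw [hQp]; ext j; rw [coeff_reflect, coeff_reflect, revAt_invol]
  have hderq : derivative q = reflect n (C ((n+1 : ℕ) : ℂ) * P - X * derivative P) := by
    have := deriv_reflect_aux P (n+1) (by omega) hPd
    rw [← hqP, Nat.add_sub_cancel] at this
    exact this
  have hderp : derivative p = reflect n (C ((n+1 : ℕ) : ℂ) * Q - X * derivative Q) := by
    have := deriv_reflect_aux Q (n+1) (by omega) (hQd.trans (by omega))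
    rw [← hpQ, Nat.add_sub_cancel] at this
    exact this
  have hWmap : W.map σ = derivative P * Q - P * derivative Q := by
    rw [hW]
    simp only [Polynomial.map_sub, Polynomial.map_mul, derivative_map, hPdef, hQdef]
  have hdPd : (derivative P).natDegree ≤ n := (natDegree_derivative_le P).trans (by omega)
  have hdQd : (derivative Q).natDegree ≤ n - 1 := (natDegree_derivative_le Q).trans (by omega)
  have hWd : (W.map σ).natDegree ≤ 2*n := by
    rw [hWmap]
    refine (natDegree_sub_le _ _).trans (max_le ?_ ?_)
    · exact natDegree_mul_le.trans (by omega)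
    · exact natDegree_mul_le.trans (by omega)
  have hgQd : (C ((n+1 : ℕ) : ℂ) * Q - X * derivative Q).natDegree ≤ n := by
    have := g_deg_aux Q (n+1) (by omega) (hQd.trans (by omega))
    rwa [Nat.add_sub_cancel] at this
  have hgPd : (C ((n+1 : ℕ) : ℂ) * P - X * derivative P).natDegree ≤ n := by
    have := g_deg_aux P (n+1) (by omega) hPd
    rwa [Nat.add_sub_cancel] at this
  have e1 : derivative p * q
      = reflect (n + (n+1)) ((C ((n+1:ℕ):ℂ) * Q - X * derivative Q) * P) := by
    rw [reflect_mul _ _ hgQd hPd, ← hderp, ← hqP]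
  have e2 : p * derivative q
      = reflect (n + (n+1)) (Q * (C ((n+1:ℕ):ℂ) * P - X * derivative P)) := by
    have hidx : n + (n+1) = (n+1) + n := by omega
    rw [hidx, reflect_mul _ _ (hQd.trans (by omega)) hgPd, ← hderq, ← hpQ]
  have e3 : (C ((n+1:ℕ):ℂ) * Q - X * derivative Q) * P
      - Q * (C ((n+1:ℕ):ℂ) * P - X * derivative P) = X * (W.map σ) := by
    rw [hWmap]; ring
  have key : W = reflect (2*n) (W.map σ) := by
    have h4 : W = reflect (1 + 2*n) (X * (W.map σ)) := by
      have hidx : n + (n+1) = 1 + 2*n := by omega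
      conv_lhs => rw [hW, e1, e2, ← reflect_sub, e3, hidx]
    conv_lhs => rw [h4]
    rw [reflect_mul _ _ natDegree_X.le hWd, reflect_one_X, one_mul]
  constructor
  · intro z hz
    have hz' : (z⁻¹ : ℂ) ≠ 0 := inv_ne_zero hz
    letI := invertibleOfNonzero hz'
    have h := eval₂_reflect_mul_pow (RingHom.id ℂ) (z⁻¹) (2*n) (W.map σ) hWd
    rw [invOf_eq_inv, inv_inv] at h
    have heval : ∀ (f : ℂ[X]) (x : ℂ), eval₂ (RingHom.id ℂ) x f = f.eval x := fun _ _ => rfl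
    rw [heval, heval, ← key] at h
    have h2 : (W.map σ).eval z⁻¹ = σ (W.eval (1 / σ z)) := by
      have hx : z⁻¹ = σ (1 / σ z) := by
        rw [one_div, map_inv₀, hσ, Complex.conj_conj]
      rw [hx, eval_map]
      exact eval₂_hom σ _
    rw [h2] at h
    have hzpow : (z : ℂ)^(2*n) ≠ 0 := pow_ne_zero _ hz
    field_simp at h ⊢
    rw [← h, one_div, inv_pow, inv_mul_cancel_right₀ hzpow]
  · intro j hj
    conv_lhs => rw [key]
    rw [coeff_reflect, revAt_le hj, coeff_map]
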